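/- arXiv:1406.7079 — 3 statements merged into one kernel-verified Lean document; each statement's English description precedes it below -/
import Mathlib

section
/- For every bounded open convex subset Ω of ℝⁿ (n ≥ 1), the Hilbert distance d_Ω is a metric on Ω: it is nonnegative, d_Ω(x,y) = 0 if and only if x = y, it is symmetric, and it satisfies the triangle inequality d_Ω(x,z) ≤ d_Ω(x,y) + d_Ω(y,z) for all x, y, z ∈ Ω. -/
open Set MeasureTheory
open scoped ENNReal Classical

noncomputable section

/-- The set of parameters `t` for which `x + t • (y - x)` lies in the closure of `Ω`. -/
def chordParams {n : ℕ} (Ω : Set (EuclideanSpace ℝ (Fin n)))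
    (x y : EuclideanSpace ℝ (Fin n)) : Set ℝ :=
  {t : ℝ | x + t • (y - x) ∈ closure Ω}

/-- The Hilbert distance on a bounded open convex set `Ω`: for `x ≠ y` the line
through `x` and `y` meets `∂Ω` at `p = x + a • (y - x)` and `q = x + b • (y - x)`
where `a = sInf (chordParams Ω x y) ≤ 0` and `b = sSup (chordParams Ω x y) ≥ 1`,
so that `p, x, y, q` occur in this order on the line, and
`d_Ω(x,y) = (1/2) log (|p-y||q-x| / (|p-x||q-y|))`. -/
def hilbertDist {n : ℕ} (Ω : Set (EuclideanSpace ℝ (Fin n)))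
    (x y : EuclideanSpace ℝ (Fin n)) : ℝ :=
  if x = y then 0
  else
    let p := x + sInf (chordParams Ω x y) • (y - x)
    let q := x + sSup (chordParams Ω x y) • (y - x)
    (1 / 2) * Real.log ((dist p y * dist q x) / (dist p x * dist q y))

section HilbertAux

set_option linter.unusedSectionVars false

variable {n : ℕ} {Ω : Set (EuclideanSpace ℝ (Fin n))} {x y z : EuclideanSpace ℝ (Fin n)}

lemma chord_convex (hconv : Convex ℝ Ω) : Convex ℝ (chordParams Ω x y) := by
  intro s hs t ht μ ν hμ hν hμν
  have h := hconv.closure hs ht hμ hν hμν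
  show x + (μ * s + ν * t) • (y - x) ∈ closure Ω
  have : x + (μ * s + ν * t) • (y - x) = μ • (x + s • (y - x)) + ν • (x + t • (y - x)) := by
    have hx1 : x + (μ * s + ν * t) • (y - x) = (μ + ν) • x + (μ * s + ν * t) • (y - x) := by
      rw [hμν, one_smul]
    rw [hx1]; module
  rw [this]; exact h

lemma chord_closed : IsClosed (chordParams Ω x y) := by
  have : Continuous fun t : ℝ => x + t • (y - x) := by continuity
  exact isClosed_closure.preimage this

lemma chord_bdd (hbd : Bornology.IsBounded Ω) (hxy : x ≠ y) :
    BddAbove (chordParams Ω x y) ∧ BddBelow (chordParams Ω x y) := by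
  obtain ⟨C, hC⟩ := isBounded_iff_forall_norm_le.1 hbd.closure
  have hv : (0:ℝ) < ‖y - x‖ := by
    rw [norm_pos_iff]; exact sub_ne_zero.2 hxy.symm
  have key : ∀ t ∈ chordParams Ω x y, |t| ≤ (C + ‖x‖) / ‖y - x‖ := by
    intro t ht
    rw [le_div_iff₀ hv]
    have h1 : ‖x + t • (y - x)‖ ≤ C := hC _ ht
    have h2 : ‖t • (y - x)‖ ≤ ‖x + t • (y - x)‖ + ‖x‖ := by
      have := norm_add_le (x + t • (y - x)) (-x)
      simpa using this
    rw [norm_smul] at h2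
    simp only [Real.norm_eq_abs] at h2
    linarith
  constructor
  · exact ⟨(C + ‖x‖) / ‖y - x‖, fun t ht => (abs_le.1 (key t ht)).2⟩
  · exact ⟨-((C + ‖x‖) / ‖y - x‖), fun t ht => (abs_le.1 (key t ht)).1⟩

lemma chord_mem_of_mem (hop : IsOpen Ω) (hxy : x ≠ y) {t : ℝ}
    (h : x + t • (y - x) ∈ Ω) :
    ∃ δ > 0, t + δ ∈ chordParams Ω x y ∧ t - δ ∈ chordParams Ω x y := by
  obtain ⟨ε, hε, hball⟩ := Metric.isOpen_iff.1 hop _ h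
  have hv : (0:ℝ) < ‖y - x‖ := by rw [norm_pos_iff]; exact sub_ne_zero.2 hxy.symm
  refine ⟨ε / (2 * ‖y - x‖), by positivity, ?_, ?_⟩ <;>
  · refine subset_closure (hball ?_)
    rw [Metric.mem_ball, dist_eq_norm]
    have : ∀ s : ℝ, x + s • (y - x) - (x + t • (y - x)) = (s - t) • (y - x) := by
      intro s; module
    rw [this, norm_smul, Real.norm_eq_abs]
    have h2 : |t + ε / (2 * ‖y - x‖) - t| = ε / (2 * ‖y - x‖) := by
      rw [add_sub_cancel_left, abs_of_pos (by positivity)]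
    have h3 : |t - ε / (2 * ‖y - x‖) - t| = ε / (2 * ‖y - x‖) := by
      have : t - ε / (2 * ‖y - x‖) - t = -(ε / (2 * ‖y - x‖)) := by ring
      rw [this, abs_neg, abs_of_pos (by positivity)]
    have h4 : ε / (2 * ‖y - x‖) * ‖y - x‖ = ε / 2 := by
      field_simp
    first
    | (rw [h2, h4]; linarith)
    | (rw [h3, h4]; linarith)

lemma chord_mem_zero (hx : x ∈ Ω) : (0:ℝ) ∈ chordParams Ω x y := by
  show x + (0:ℝ) • (y - x) ∈ closure Ω
  simpa using subset_closure hx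

variable (hbd : Bornology.IsBounded Ω) (hop : IsOpen Ω) (hconv : Convex ℝ Ω)
  (hx : x ∈ Ω) (hy : y ∈ Ω) (hxy : x ≠ y)
include hbd hop hconv hx hy hxy

lemma chord_sSup_gt_one : 1 < sSup (chordParams Ω x y) := by
  obtain ⟨δ, hδ, h1, _⟩ := chord_mem_of_mem hop hxy (t := 1) (by simpa using hy)
  have := le_csSup (chord_bdd hbd hxy).1 h1
  linarith

lemma chord_sInf_lt_zero : sInf (chordParams Ω x y) < 0 := by
  obtain ⟨δ, hδ, _, h1⟩ := chord_mem_of_mem hop hxy (t := 0) (by simpa using hx)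
  have := csInf_le (chord_bdd hbd hxy).2 h1
  simp at this
  linarith

lemma chord_sSup_mem : sSup (chordParams Ω x y) ∈ chordParams Ω x y :=
  chord_closed.csSup_mem ⟨0, chord_mem_zero hx⟩ (chord_bdd hbd hxy).1

lemma chord_sInf_mem : sInf (chordParams Ω x y) ∈ chordParams Ω x y :=
  chord_closed.csInf_mem ⟨0, chord_mem_zero hx⟩ (chord_bdd hbd hxy).2

lemma chord_q_not_mem : x + sSup (chordParams Ω x y) • (y - x) ∉ Ω := by
  intro h
  obtain ⟨δ, hδ, h1, _⟩ := chord_mem_of_mem hop hxy h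
  have := le_csSup (chord_bdd hbd hxy).1 h1
  linarith

lemma chord_eq_Icc :
    chordParams Ω x y = Icc (sInf (chordParams Ω x y)) (sSup (chordParams Ω x y)) := by
  apply Subset.antisymm
  · intro t ht
    exact ⟨csInf_le (chord_bdd hbd hxy).2 ht, le_csSup (chord_bdd hbd hxy).1 ht⟩
  · exact (chord_convex hconv).ordConnected.out (chord_sInf_mem hbd hop hconv hx hy hxy)
      (chord_sSup_mem hbd hop hconv hx hy hxy)

lemma chord_swap_sSup :
    sSup (chordParams Ω y x) = 1 - sInf (chordParams Ω x y) ∧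
    sInf (chordParams Ω y x) = 1 - sSup (chordParams Ω x y) := by
  have ha := chord_sInf_lt_zero hbd hop hconv hx hy hxy
  have hb := chord_sSup_gt_one hbd hop hconv hx hy hxy
  have hswap : chordParams Ω y x
      = Icc (1 - sSup (chordParams Ω x y)) (1 - sInf (chordParams Ω x y)) := by
    ext t
    have hmem : (t ∈ chordParams Ω y x) ↔ (1 - t ∈ chordParams Ω x y) := by
      show y + t • (x - y) ∈ closure Ω ↔ x + (1 - t) • (y - x) ∈ closure Ω
      have : y + t • (x - y) = x + (1 - t) • (y - x) := by module
      rw [this]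
    rw [hmem]
    constructor
    · intro h
      have l1 := csInf_le (chord_bdd hbd hxy).2 h
      have l2 := le_csSup (chord_bdd hbd hxy).1 h
      exact ⟨by linarith, by linarith⟩
    · rintro ⟨h1, h2⟩
      exact (chord_convex hconv).ordConnected.out (chord_sInf_mem hbd hop hconv hx hy hxy)
        (chord_sSup_mem hbd hop hconv hx hy hxy) ⟨by linarith, by linarith⟩
  rw [hswap, csSup_Icc (by linarith), csInf_Icc (by linarith)]
  exact ⟨rfl, rfl⟩

/-- The Hilbert distance as a product of two Funk ratios. -/
lemma hilbertDist_eq :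
    hilbertDist Ω x y =
      (1 / 2) * Real.log
        ((sSup (chordParams Ω x y) / (sSup (chordParams Ω x y) - 1)) *
         (sSup (chordParams Ω y x) / (sSup (chordParams Ω y x) - 1))) := by
  have ha := chord_sInf_lt_zero hbd hop hconv hx hy hxy
  have hb := chord_sSup_gt_one hbd hop hconv hx hy hxy
  have hswap := (chord_swap_sSup hbd hop hconv hx hy hxy).1
  set a := sInf (chordParams Ω x y) with ha'
  set b := sSup (chordParams Ω x y) with hb'
  have hv : (0:ℝ) < ‖y - x‖ := by rw [norm_pos_iff]; exact sub_ne_zero.2 hxy.symm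
  rw [hilbertDist, if_neg hxy]
  simp only
  have e1 : dist (x + a • (y - x)) y = (1 - a) * ‖y - x‖ := by
    rw [dist_eq_norm]
    have : x + a • (y - x) - y = (a - 1) • (y - x) := by module
    rw [this, norm_smul, Real.norm_eq_abs, abs_of_neg (by linarith)]
    ring
  have e2 : dist (x + b • (y - x)) x = b * ‖y - x‖ := by
    rw [dist_eq_norm]
    have : x + b • (y - x) - x = b • (y - x) := by module
    rw [this, norm_smul, Real.norm_eq_abs, abs_of_pos (by linarith)]
  have e3 : dist (x + a • (y - x)) x = -a * ‖y - x‖ := by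
    rw [dist_eq_norm]
    have : x + a • (y - x) - x = a • (y - x) := by module
    rw [this, norm_smul, Real.norm_eq_abs, abs_of_neg (by linarith)]
  have e4 : dist (x + b • (y - x)) y = (b - 1) * ‖y - x‖ := by
    rw [dist_eq_norm]
    have : x + b • (y - x) - y = (b - 1) • (y - x) := by module
    rw [this, norm_smul, Real.norm_eq_abs, abs_of_pos (by linarith)]
  rw [e1, e2, e3, e4, hswap]
  have h1 : ‖y - x‖ ≠ 0 := hv.ne'
  have h2 : a ≠ 0 := ne_of_lt ha
  have h3 : b - 1 ≠ 0 := by intro h; rw [sub_eq_zero] at h; linarith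
  have h4 : (1:ℝ) - a ≠ 0 := by intro h; rw [sub_eq_zero] at h; linarith
  have h5 : (1:ℝ) - a - 1 ≠ 0 := by intro h; apply h2; linarith
  have harg : (1 - a) * ‖y - x‖ * (b * ‖y - x‖) / (-a * ‖y - x‖ * ((b - 1) * ‖y - x‖))
      = b / (b - 1) * ((1 - a) / (1 - a - 1)) := by
    field_simp
    ring
  rw [harg]

end HilbertAux

section HilbertTriangle

set_option linter.unusedSectionVars false

variable {n : ℕ} {Ω : Set (EuclideanSpace ℝ (Fin n))} {x y z : EuclideanSpace ℝ (Fin n)}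

lemma chord_affine_eval (f : EuclideanSpace ℝ (Fin n) →L[ℝ] ℝ) (t : ℝ) :
    f (x + t • (y - x)) = f x + t * (f y - f x) := by
  rw [map_add, f.map_smul, map_sub, smul_eq_mul]

lemma funk_le {f : EuclideanSpace ℝ (Fin n) →L[ℝ] ℝ} {c : ℝ}
    (hfc : ∀ w ∈ Ω, f w < c) {b : ℝ}
    (hq : x + b • (y - x) ∈ closure Ω) :
    (b - 1) * (c - f x) ≤ b * (c - f y) := by
  have hcl : ∀ w ∈ closure Ω, f w ≤ c := by
    intro w hw
    have : closure Ω ⊆ f ⁻¹' Iic c :=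
      closure_minimal (fun u hu => le_of_lt (hfc u hu)) (isClosed_Iic.preimage f.continuous)
    exact this hw
  have h1 : f x + b * (f y - f x) ≤ c := by
    have := hcl _ hq
    rwa [chord_affine_eval] at this
  nlinarith

variable (hbd : Bornology.IsBounded Ω) (hop : IsOpen Ω) (hconv : Convex ℝ Ω)
  (hx : x ∈ Ω) (hy : y ∈ Ω) (hz : z ∈ Ω)
  (hxy : x ≠ y) (hyz : y ≠ z) (hxz : x ≠ z)
include hbd hop hconv hx hy hz hxy hyz hxz

/-- The key inequality between Funk ratios, proved via a separating hyperplane at the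
boundary point `q` on the ray from `x` through `z`. -/
lemma funk_ratio_triangle :
    sSup (chordParams Ω x z) / (sSup (chordParams Ω x z) - 1) ≤
      (sSup (chordParams Ω x y) / (sSup (chordParams Ω x y) - 1)) *
      (sSup (chordParams Ω y z) / (sSup (chordParams Ω y z) - 1)) := by
  set b3 := sSup (chordParams Ω x z) with hb3'
  set b1 := sSup (chordParams Ω x y) with hb1'
  set b2 := sSup (chordParams Ω y z) with hb2'
  have hb3 : 1 < b3 := chord_sSup_gt_one hbd hop hconv hx hz hxz
  have hb1 : 1 < b1 := chord_sSup_gt_one hbd hop hconv hx hy hxy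
  have hb2 : 1 < b2 := chord_sSup_gt_one hbd hop hconv hy hz hyz
  -- the boundary point q on the chord from x through z
  have hqcl : x + b3 • (z - x) ∈ closure Ω := chord_sSup_mem hbd hop hconv hx hz hxz
  have hqnot : x + b3 • (z - x) ∉ Ω := chord_q_not_mem hbd hop hconv hx hz hxz
  obtain ⟨f, hf⟩ := geometric_hahn_banach_open_point hconv hop hqnot
  set c := f (x + b3 • (z - x)) with hc
  -- positivity of the affine functional on Ω
  have px : 0 < c - f x := sub_pos.2 (hf x hx)
  have py : 0 < c - f y := sub_pos.2 (hf y hy)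
  have pz : 0 < c - f z := sub_pos.2 (hf z hz)
  -- exact relation at q
  have heq : (b3 - 1) * (c - f x) = b3 * (c - f z) := by
    have := chord_affine_eval (x := x) (y := z) f b3
    nlinarith [this]
  -- inequalities from the chords x-y and y-z
  have h1 : (b1 - 1) * (c - f x) ≤ b1 * (c - f y) :=
    funk_le hf (chord_sSup_mem hbd hop hconv hx hy hxy)
  have h2 : (b2 - 1) * (c - f y) ≤ b2 * (c - f z) :=
    funk_le hf (chord_sSup_mem hbd hop hconv hy hz hyz)
  have e0 : b3 / (b3 - 1) = (c - f x) / (c - f z) := by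
    rw [div_eq_div_iff (by linarith) pz.ne']
    nlinarith [heq]
  have e1 : (c - f x) / (c - f y) ≤ b1 / (b1 - 1) := by
    rw [div_le_div_iff₀ py (by linarith)]
    nlinarith [h1]
  have e2 : (c - f y) / (c - f z) ≤ b2 / (b2 - 1) := by
    rw [div_le_div_iff₀ pz (by linarith)]
    nlinarith [h2]
  have esplit : (c - f x) / (c - f z) = ((c - f x) / (c - f y)) * ((c - f y) / (c - f z)) := by
    field_simp
  rw [e0, esplit]
  exact mul_le_mul e1 e2 (le_of_lt (div_pos py pz))
    (div_nonneg (by linarith) (by linarith))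

end HilbertTriangle

/-- For every bounded open convex subset `Ω` of `ℝⁿ` (`n ≥ 1`), the
Hilbert distance is a metric on `Ω`. -/
theorem hilbertDist_is_metric {n : ℕ} (hn : 1 ≤ n)
    (Ω : Set (EuclideanSpace ℝ (Fin n)))
    (hbd : Bornology.IsBounded Ω) (hop : IsOpen Ω) (hconv : Convex ℝ Ω) :
    ∀ x ∈ Ω, ∀ y ∈ Ω, ∀ z ∈ Ω,
      0 ≤ hilbertDist Ω x y ∧
      (hilbertDist Ω x y = 0 ↔ x = y) ∧
      hilbertDist Ω x y = hilbertDist Ω y x ∧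
      hilbertDist Ω x z ≤ hilbertDist Ω x y + hilbertDist Ω y z := by
  intro x hx y hy z hz
  -- Funk ratio notation
  set B : EuclideanSpace ℝ (Fin n) → EuclideanSpace ℝ (Fin n) → ℝ :=
    fun u v => sSup (chordParams Ω u v) / (sSup (chordParams Ω u v) - 1) with hB
  have hBgt : ∀ u ∈ Ω, ∀ v ∈ Ω, u ≠ v → 1 < B u v := by
    intro u hu v hv huv
    have h1 := chord_sSup_gt_one hbd hop hconv hu hv huv
    rw [hB]
    rw [lt_div_iff₀ (by linarith)]
    linarith
  have hDeq : ∀ u ∈ Ω, ∀ v ∈ Ω, u ≠ v →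
      hilbertDist Ω u v = (1 / 2) * Real.log (B u v * B v u) := by
    intro u hu v hv huv
    exact hilbertDist_eq hbd hop hconv hu hv huv
  -- positivity for distinct points
  have hpos : ∀ u ∈ Ω, ∀ v ∈ Ω, u ≠ v → 0 < hilbertDist Ω u v := by
    intro u hu v hv huv
    rw [hDeq u hu v hv huv]
    have h1 := hBgt u hu v hv huv
    have h2 := hBgt v hv u hu (Ne.symm huv)
    have : (1:ℝ) < B u v * B v u := by nlinarith
    have := Real.log_pos this
    linarith
  have hzero : ∀ u, hilbertDist Ω u u = 0 := by
    intro u; rw [hilbertDist, if_pos rfl]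
  have hnonneg : ∀ u ∈ Ω, ∀ v ∈ Ω, 0 ≤ hilbertDist Ω u v := by
    intro u hu v hv
    by_cases huv : u = v
    · rw [huv, hzero]
    · exact le_of_lt (hpos u hu v hv huv)
  refine ⟨hnonneg x hx y hy, ?_, ?_, ?_⟩
  · -- d = 0 ↔ x = y
    constructor
    · intro h
      by_contra hne
      exact absurd h (ne_of_gt (hpos x hx y hy hne))
    · intro h; rw [h, hzero]
  · -- symmetry
    by_cases hxy : x = y
    · rw [hxy]
    · rw [hDeq x hx y hy hxy, hDeq y hy x hx (Ne.symm hxy),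
        mul_comm (B x y) (B y x)]
  · -- triangle inequality
    by_cases hxz : x = z
    · subst hxz
      rw [hzero]
      exact add_nonneg (hnonneg x hx y hy) (hnonneg y hy x hx)
    by_cases hxy : x = y
    · subst hxy
      rw [hzero, zero_add]
    by_cases hyz : y = z
    · subst hyz
      rw [hzero, add_zero]
    -- all distinct
    have t1 : B x z ≤ B x y * B y z :=
      funk_ratio_triangle hbd hop hconv hx hy hz hxy hyz hxz
    have t2 : B z x ≤ B z y * B y x :=
      funk_ratio_triangle hbd hop hconv hz hy hx (Ne.symm hyz) (Ne.symm hxy) (Ne.symm hxz)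
    have p1 := hBgt x hx y hy hxy
    have p2 := hBgt y hy z hz hyz
    have p3 := hBgt x hx z hz hxz
    have p4 := hBgt z hz x hx (Ne.symm hxz)
    have p5 := hBgt y hy x hx (Ne.symm hxy)
    have p6 := hBgt z hz y hy (Ne.symm hyz)
    rw [hDeq x hx z hz hxz, hDeq x hx y hy hxy, hDeq y hy z hz hyz]
    have key : B x z * B z x ≤ (B x y * B y x) * (B y z * B z y) := by
      have h1 : B x z * B z x ≤ (B x y * B y z) * (B z y * B y x) :=
        mul_le_mul t1 t2 (by linarith) (by nlinarith)
      nlinarith [h1]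
    have hlog : Real.log (B x z * B z x) ≤
        Real.log ((B x y * B y x) * (B y z * B z y)) :=
      Real.log_le_log (by nlinarith) key
    have hsplit : Real.log ((B x y * B y x) * (B y z * B z y))
        = Real.log (B x y * B y x) + Real.log (B y z * B z y) :=
      Real.log_mul (by nlinarith) (by nlinarith)
    linarith

end
end

section
/- In a strictly convex Hilbert geometry geodesics are unique and are the line segments: if Ω ⊆ ℝⁿ is bounded, open, convex and strictly convex, and x, y, z ∈ Ω satisfy d_Ω(x,z) = d_Ω(x,y) + d_Ω(y,z), then y lies on the segment [x, z]. -/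
open Set MeasureTheory
open scoped ENNReal Classical

noncomputable section

namespace HilbertAux

variable {n : ℕ} {Ω : Set (EuclideanSpace ℝ (Fin n))}

lemma zero_mem_chord {x y : EuclideanSpace ℝ (Fin n)} (hx : x ∈ Ω) :
    (0:ℝ) ∈ chordParams Ω x y := by
  simpa [chordParams] using subset_closure hx

lemma chord_bddBelow {x y : EuclideanSpace ℝ (Fin n)} (hbd : Bornology.IsBounded Ω)
    (hxy : x ≠ y) : BddBelow (chordParams Ω x y) := by
  obtain ⟨R, hR⟩ := hbd.closure.exists_norm_le
  have hnorm : 0 < ‖y - x‖ := by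
    rw [norm_pos_iff, sub_ne_zero]; exact fun h => hxy h.symm
  refine ⟨-((R + ‖x‖)/‖y - x‖), fun t ht => ?_⟩
  have h1 : ‖x + t • (y - x)‖ ≤ R := hR _ ht
  have h2 : ‖t • (y - x)‖ ≤ ‖x + t • (y - x)‖ + ‖x‖ := by
    have := norm_sub_le (x + t • (y - x)) x
    simpa using this
  rw [norm_smul, Real.norm_eq_abs] at h2
  have h3 : |t| ≤ (R + ‖x‖)/‖y - x‖ := by
    rw [le_div_iff₀ hnorm]; nlinarith [abs_nonneg t]
  have := (abs_le.1 h3).1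
  linarith

lemma chord_bddAbove {x y : EuclideanSpace ℝ (Fin n)} (hbd : Bornology.IsBounded Ω)
    (hxy : x ≠ y) : BddAbove (chordParams Ω x y) := by
  obtain ⟨R, hR⟩ := hbd.closure.exists_norm_le
  have hnorm : 0 < ‖y - x‖ := by
    rw [norm_pos_iff, sub_ne_zero]; exact fun h => hxy h.symm
  refine ⟨(R + ‖x‖)/‖y - x‖, fun t ht => ?_⟩
  have h1 : ‖x + t • (y - x)‖ ≤ R := hR _ ht
  have h2 : ‖t • (y - x)‖ ≤ ‖x + t • (y - x)‖ + ‖x‖ := by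
    have := norm_sub_le (x + t • (y - x)) x
    simpa using this
  rw [norm_smul, Real.norm_eq_abs] at h2
  have h3 : |t| ≤ (R + ‖x‖)/‖y - x‖ := by
    rw [le_div_iff₀ hnorm]; nlinarith [abs_nonneg t]
  exact (abs_le.1 h3).2

lemma chord_closed {x y : EuclideanSpace ℝ (Fin n)} : IsClosed (chordParams Ω x y) := by
  have : chordParams Ω x y = (fun t : ℝ => x + t • (y - x)) ⁻¹' closure Ω := rfl
  rw [this]
  exact IsClosed.preimage (by fun_prop) isClosed_closure


/-- All the basic facts about the chord through `u, w`. -/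
lemma chord_setup (hbd : Bornology.IsBounded Ω) (hop : IsOpen Ω)
    {u w : EuclideanSpace ℝ (Fin n)} (hu : u ∈ Ω) (hw : w ∈ Ω) (huw : u ≠ w) :
    sInf (chordParams Ω u w) < 0 ∧ 1 < sSup (chordParams Ω u w) ∧
    (u + sInf (chordParams Ω u w) • (w - u) ∈ closure Ω) ∧
    (u + sSup (chordParams Ω u w) • (w - u) ∈ closure Ω) ∧
    (u + sInf (chordParams Ω u w) • (w - u) ∉ Ω) ∧
    (u + sSup (chordParams Ω u w) • (w - u) ∉ Ω) := by
  have hnorm : 0 < ‖w - u‖ := by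
    rw [norm_pos_iff, sub_ne_zero]; exact fun h => huw h.symm
  have hne : (chordParams Ω u w).Nonempty := ⟨0, zero_mem_chord hu⟩
  have hbb := chord_bddBelow hbd huw
  have hba := chord_bddAbove hbd huw
  have hamem : sInf (chordParams Ω u w) ∈ chordParams Ω u w :=
    chord_closed.csInf_mem hne hbb
  have hbmem : sSup (chordParams Ω u w) ∈ chordParams Ω u w :=
    chord_closed.csSup_mem hne hba
  -- small step lemma: points near a point of Ω along the line stay in Ω
  have step : ∀ m ∈ Ω, ∃ δ : ℝ, 0 < δ ∧ ∀ s : ℝ, |s| ≤ δ → m + s • (w - u) ∈ Ω := by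
    intro m hm
    obtain ⟨ε, hε, hball⟩ := Metric.isOpen_iff.1 hop m hm
    refine ⟨ε / (2 * ‖w - u‖), by positivity, fun s hs => ?_⟩
    apply hball
    rw [Metric.mem_ball, dist_eq_norm]
    have : m + s • (w - u) - m = s • (w - u) := by abel
    rw [this, norm_smul, Real.norm_eq_abs]
    have h1 : |s| * ‖w - u‖ ≤ (ε / (2 * ‖w - u‖)) * ‖w - u‖ :=
      mul_le_mul_of_nonneg_right hs hnorm.le
    have h2 : (ε / (2 * ‖w - u‖)) * ‖w - u‖ = ε / 2 := by field_simp
    linarith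
  obtain ⟨δu, hδu, hstepu⟩ := step u hu
  obtain ⟨δw, hδw, hstepw⟩ := step w hw
  have ha_lt : sInf (chordParams Ω u w) < 0 := by
    have hmem : (-δu) ∈ chordParams Ω u w :=
      subset_closure (hstepu (-δu) (by rw [abs_neg, abs_of_pos hδu]))
    have := csInf_le hbb hmem
    linarith
  have hb_gt : 1 < sSup (chordParams Ω u w) := by
    have hmem : (1 + δw) ∈ chordParams Ω u w := by
      have : u + (1 + δw) • (w - u) = w + δw • (w - u) := by module
      show u + (1 + δw) • (w - u) ∈ closure Ω
      rw [this]
      exact subset_closure (hstepw δw (by rw [abs_of_pos hδw]))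
    have := le_csSup hba hmem
    linarith
  refine ⟨ha_lt, hb_gt, hamem, hbmem, ?_, ?_⟩
  · intro hmem
    obtain ⟨δ, hδ, hstep'⟩ := step _ hmem
    have : (sInf (chordParams Ω u w) - δ) ∈ chordParams Ω u w := by
      have he : u + (sInf (chordParams Ω u w) - δ) • (w - u)
          = (u + sInf (chordParams Ω u w) • (w - u)) + (-δ) • (w - u) := by module
      show _ ∈ closure Ω
      rw [he]
      exact subset_closure (hstep' (-δ) (by rw [abs_neg, abs_of_pos hδ]))
    have := csInf_le hbb this
    linarith
  · intro hmem
    obtain ⟨δ, hδ, hstep'⟩ := step _ hmem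
    have : (sSup (chordParams Ω u w) + δ) ∈ chordParams Ω u w := by
      have he : u + (sSup (chordParams Ω u w) + δ) • (w - u)
          = (u + sSup (chordParams Ω u w) • (w - u)) + δ • (w - u) := by module
      show _ ∈ closure Ω
      rw [he]
      exact subset_closure (hstep' δ (by rw [abs_of_pos hδ]))
    have := le_csSup hba this
    linarith


lemma two_hilbertDist_eq {u w : EuclideanSpace ℝ (Fin n)} (huw : u ≠ w)
    (ha : sInf (chordParams Ω u w) < 0) (hb : 1 < sSup (chordParams Ω u w)) :
    2 * hilbertDist Ω u w =
      Real.log ((sSup (chordParams Ω u w) / (sSup (chordParams Ω u w) - 1)) *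
        ((1 - sInf (chordParams Ω u w)) / (-sInf (chordParams Ω u w)))) := by
  set a := sInf (chordParams Ω u w) with hadef
  set b := sSup (chordParams Ω u w) with hbdef
  have hnorm : 0 < ‖w - u‖ := by
    rw [norm_pos_iff, sub_ne_zero]; exact fun h => huw h.symm
  have d1 : dist (u + a • (w - u)) w = (1 - a) * ‖w - u‖ := by
    rw [dist_eq_norm, show u + a • (w - u) - w = (a - 1) • (w - u) by module,
      norm_smul, Real.norm_eq_abs, abs_of_neg (by linarith : a - 1 < 0)]
    ring
  have d2 : dist (u + b • (w - u)) u = b * ‖w - u‖ := by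
    rw [dist_eq_norm, show u + b • (w - u) - u = b • (w - u) by module,
      norm_smul, Real.norm_eq_abs, abs_of_pos (by linarith : (0:ℝ) < b)]
  have d3 : dist (u + a • (w - u)) u = (-a) * ‖w - u‖ := by
    rw [dist_eq_norm, show u + a • (w - u) - u = a • (w - u) by module,
      norm_smul, Real.norm_eq_abs, abs_of_neg ha]
  have d4 : dist (u + b • (w - u)) w = (b - 1) * ‖w - u‖ := by
    rw [dist_eq_norm, show u + b • (w - u) - w = (b - 1) • (w - u) by module,
      norm_smul, Real.norm_eq_abs, abs_of_pos (by linarith : (0:ℝ) < b - 1)]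
  rw [hilbertDist, if_neg huw]
  simp only [← hadef, ← hbdef, d1, d2, d3, d4]
  have h1 : (-a) ≠ 0 := by linarith
  have h2 : b - 1 ≠ 0 := by linarith
  have h3 : ‖w - u‖ ≠ 0 := ne_of_gt hnorm
  rw [show ((1 - a) * ‖w - u‖ * (b * ‖w - u‖)) / ((-a) * ‖w - u‖ * ((b - 1) * ‖w - u‖))
      = (b / (b - 1)) * ((1 - a) / (-a)) from by
    rw [mul_div_mul_comm, mul_div_mul_right _ _ h3, mul_div_mul_right _ _ h3, mul_comm]]
  ring

lemma hilbertDist_pos (hbd : Bornology.IsBounded Ω) (hop : IsOpen Ω)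
    {u w : EuclideanSpace ℝ (Fin n)} (hu : u ∈ Ω) (hw : w ∈ Ω) (huw : u ≠ w)
    (ha : sInf (chordParams Ω u w) < 0) (hb : 1 < sSup (chordParams Ω u w)) :
    0 < hilbertDist Ω u w := by
  have h2 := two_hilbertDist_eq (Ω := Ω) huw ha hb
  set a := sInf (chordParams Ω u w)
  set b := sSup (chordParams Ω u w)
  have h3 : (1:ℝ) < (b / (b - 1)) * ((1 - a) / (-a)) := by
    rw [div_mul_div_comm, lt_div_iff₀ (by nlinarith : (0:ℝ) < (b-1) * (-a))]
    nlinarith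
  have := Real.log_pos h3
  linarith

lemma affine_param (ℓ : EuclideanSpace ℝ (Fin n) →L[ℝ] ℝ) (c t : ℝ)
    (u w : EuclideanSpace ℝ (Fin n)) :
    ℓ (u + t • (w - u)) + c = (1 - t) * (ℓ u + c) + t * (ℓ w + c) := by
  rw [map_add, _root_.map_smul, map_sub, smul_eq_mul]
  ring

lemma nonneg_on_closure (ℓ : EuclideanSpace ℝ (Fin n) →L[ℝ] ℝ) (c : ℝ)
    (hpos : ∀ m ∈ Ω, 0 < ℓ m + c) : ∀ m ∈ closure Ω, 0 ≤ ℓ m + c := by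
  have : closure Ω ⊆ {m | 0 ≤ ℓ m + c} :=
    closure_minimal (fun m hm => (hpos m hm).le)
      (isClosed_le continuous_const (ℓ.continuous.add continuous_const))
  exact fun m hm => this hm

/-- The two fundamental one-functional bounds along a chord. -/
lemma pair_bounds (hbd : Bornology.IsBounded Ω) (hop : IsOpen Ω)
    {u w : EuclideanSpace ℝ (Fin n)} (hu : u ∈ Ω) (hw : w ∈ Ω)
    (ha : sInf (chordParams Ω u w) < 0) (hb : 1 < sSup (chordParams Ω u w))
    (hpc : u + sInf (chordParams Ω u w) • (w - u) ∈ closure Ω)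
    (hqc : u + sSup (chordParams Ω u w) • (w - u) ∈ closure Ω)
    (ℓ : EuclideanSpace ℝ (Fin n) →L[ℝ] ℝ) (c : ℝ)
    (hpos : ∀ m ∈ Ω, 0 < ℓ m + c) :
    (ℓ u + c) ≤ (sSup (chordParams Ω u w) / (sSup (chordParams Ω u w) - 1)) * (ℓ w + c) ∧
    (ℓ w + c) ≤ ((1 - sInf (chordParams Ω u w)) / (-sInf (chordParams Ω u w))) * (ℓ u + c) := by
  set a := sInf (chordParams Ω u w)
  set b := sSup (chordParams Ω u w)
  have hq : 0 ≤ ℓ (u + b • (w - u)) + c := nonneg_on_closure ℓ c hpos _ hqc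
  have hp : 0 ≤ ℓ (u + a • (w - u)) + c := nonneg_on_closure ℓ c hpos _ hpc
  rw [affine_param] at hq hp
  constructor
  · rw [div_mul_eq_mul_div, le_div_iff₀ (by linarith : (0:ℝ) < b - 1)]
    nlinarith
  · rw [div_mul_eq_mul_div, le_div_iff₀ (by linarith : (0:ℝ) < -a)]
    nlinarith


/-- Two boundary points on which a supporting affine functional vanishes coincide,
by strict convexity. -/
lemma frontier_point_unique (hop : IsOpen Ω) (hconv : Convex ℝ Ω)
    (hstrict : ∀ p q : EuclideanSpace ℝ (Fin n), p ≠ q → ¬ segment ℝ p q ⊆ frontier Ω)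
    (ℓ : EuclideanSpace ℝ (Fin n) →L[ℝ] ℝ) (c : ℝ)
    (hpos : ∀ m ∈ Ω, 0 < ℓ m + c)
    {w₁ w₂ : EuclideanSpace ℝ (Fin n)}
    (h₁c : w₁ ∈ closure Ω) (h₁n : w₁ ∉ Ω) (h₁z : ℓ w₁ + c = 0)
    (h₂c : w₂ ∈ closure Ω) (h₂n : w₂ ∉ Ω) (h₂z : ℓ w₂ + c = 0) : w₁ = w₂ := by
  by_contra hne
  apply hstrict w₁ w₂ hne
  intro m hm
  have hmc : m ∈ closure Ω := hconv.closure.segment_subset h₁c h₂c hm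
  obtain ⟨s, t, hs, ht, hst, rfl⟩ := hm
  have hz : ℓ (s • w₁ + t • w₂) + c = 0 := by
    rw [map_add, _root_.map_smul, _root_.map_smul, smul_eq_mul, smul_eq_mul]
    linear_combination s * h₁z + t * h₂z - c * hst
  have hnot : s • w₁ + t • w₂ ∉ Ω := fun h => by
    have := hpos _ h; linarith
  rw [hop.frontier_eq]
  exact ⟨hmc, hnot⟩

end HilbertAux

set_option maxHeartbeats 2000000 in
/-- In a strictly convex Hilbert geometry, geodesics are unique and
are the line segments: if `Ω` is strictly convex (its boundary contains no
nondegenerate line segment) and `d_Ω(x,z) = d_Ω(x,y) + d_Ω(y,z)`, then `y` lies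
on the segment `[x, z]`. -/
theorem hilbertDist_strictly_convex_geodesics_unique {n : ℕ} (hn : 1 ≤ n)
    (Ω : Set (EuclideanSpace ℝ (Fin n)))
    (hbd : Bornology.IsBounded Ω) (hop : IsOpen Ω) (hconv : Convex ℝ Ω)
    (hstrict : ∀ p q : EuclideanSpace ℝ (Fin n), p ≠ q → ¬ segment ℝ p q ⊆ frontier Ω)
    (x y z : EuclideanSpace ℝ (Fin n)) (hx : x ∈ Ω) (hy : y ∈ Ω) (hz : z ∈ Ω)
    (hadd : hilbertDist Ω x z = hilbertDist Ω x y + hilbertDist Ω y z) :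
    y ∈ segment ℝ x z := by
  by_cases hxy : x = y
  · exact hxy ▸ left_mem_segment ℝ x z
  by_cases hyz : y = z
  · exact hyz ▸ right_mem_segment ℝ x z
  by_cases hxz : x = z
  · exfalso
    obtain ⟨ha₁, hb₁, _, _, _, _⟩ := HilbertAux.chord_setup hbd hop hx hy hxy
    have hyx : y ≠ x := fun h => hxy h.symm
    obtain ⟨ha₂, hb₂, _, _, _, _⟩ := HilbertAux.chord_setup hbd hop hy hx hyx
    have h1 := HilbertAux.hilbertDist_pos hbd hop hx hy hxy ha₁ hb₁
    have h2 := HilbertAux.hilbertDist_pos hbd hop hy hx hyx ha₂ hb₂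
    rw [← hxz, hilbertDist, if_pos rfl] at hadd
    linarith
  -- main case
  obtain ⟨ha, hb, hpc, hqc, hpn, hqn⟩ := HilbertAux.chord_setup hbd hop hx hz hxz
  obtain ⟨ha₁, hb₁, hpc₁, hqc₁, hpn₁, hqn₁⟩ := HilbertAux.chord_setup hbd hop hx hy hxy
  obtain ⟨ha₂, hb₂, hpc₂, hqc₂, hpn₂, hqn₂⟩ := HilbertAux.chord_setup hbd hop hy hz hyz
  set a := sInf (chordParams Ω x z) with hadef
  set b := sSup (chordParams Ω x z) with hbdef
  set a₁ := sInf (chordParams Ω x y) with ha₁def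
  set b₁ := sSup (chordParams Ω x y) with hb₁def
  set a₂ := sInf (chordParams Ω y z) with ha₂def
  set b₂ := sSup (chordParams Ω y z) with hb₂def
  -- supporting functionals at the two endpoints of the chord through x, z
  obtain ⟨f, hf⟩ := geometric_hahn_banach_open_point hconv hop hqn
  obtain ⟨g, hg⟩ := geometric_hahn_banach_open_point hconv hop hpn
  set ℓF : EuclideanSpace ℝ (Fin n) →L[ℝ] ℝ := -f with hℓF
  set cF : ℝ := f (x + b • (z - x)) with hcF
  set ℓG : EuclideanSpace ℝ (Fin n) →L[ℝ] ℝ := -g with hℓG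
  set cG : ℝ := g (x + a • (z - x)) with hcG
  have hFpos : ∀ m ∈ Ω, 0 < ℓF m + cF := fun m hm => by
    have := hf m hm
    simp only [hℓF, ContinuousLinearMap.neg_apply, hcF]
    linarith
  have hGpos : ∀ m ∈ Ω, 0 < ℓG m + cG := fun m hm => by
    have := hg m hm
    simp only [hℓG, ContinuousLinearMap.neg_apply, hcG]
    linarith
  have hFv : ℓF (x + b • (z - x)) + cF = 0 := by
    simp only [hℓF, ContinuousLinearMap.neg_apply, hcF]
    ring
  have hGu : ℓG (x + a • (z - x)) + cG = 0 := by
    simp only [hℓG, ContinuousLinearMap.neg_apply, hcG]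
    ring
  set Fx := ℓF x + cF with hFx'
  set Fy := ℓF y + cF with hFy'
  set Fz := ℓF z + cF with hFz'
  set Gx := ℓG x + cG with hGx'
  set Gy := ℓG y + cG with hGy'
  set Gz := ℓG z + cG with hGz'
  have hFxp : 0 < Fx := hFpos x hx
  have hFyp : 0 < Fy := hFpos y hy
  have hFzp : 0 < Fz := hFpos z hz
  have hGxp : 0 < Gx := hGpos x hx
  have hGyp : 0 < Gy := hGpos y hy
  have hGzp : 0 < Gz := hGpos z hz
  -- attainment for the pair (x, z)
  have hFattain : Fx = (b / (b - 1)) * Fz := by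
    have h := HilbertAux.affine_param ℓF cF b x z
    rw [hFv] at h
    have hb1 : b - 1 ≠ 0 := by linarith
    rw [div_mul_eq_mul_div, eq_div_iff hb1]
    linear_combination h
  have hGattain : Gz = ((1 - a) / (-a)) * Gx := by
    have h := HilbertAux.affine_param ℓG cG a x z
    rw [hGu] at h
    have ha0 : (-a) ≠ 0 := by linarith
    rw [div_mul_eq_mul_div, eq_div_iff ha0]
    linear_combination h
  -- bounds for the pairs (x,y) and (y,z)
  obtain ⟨hFb₁, -⟩ := HilbertAux.pair_bounds hbd hop hx hy ha₁ hb₁ hpc₁ hqc₁ ℓF cF hFpos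
  obtain ⟨-, hGb₁⟩ := HilbertAux.pair_bounds hbd hop hx hy ha₁ hb₁ hpc₁ hqc₁ ℓG cG hGpos
  obtain ⟨hFb₂, -⟩ := HilbertAux.pair_bounds hbd hop hy hz ha₂ hb₂ hpc₂ hqc₂ ℓF cF hFpos
  obtain ⟨-, hGb₂⟩ := HilbertAux.pair_bounds hbd hop hy hz ha₂ hb₂ hpc₂ hqc₂ ℓG cG hGpos
  have hFb₁' : Fx ≤ (b₁ / (b₁ - 1)) * Fy := hFb₁
  have hGb₁' : Gy ≤ ((1 - a₁) / (-a₁)) * Gx := hGb₁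
  have hFb₂' : Fy ≤ (b₂ / (b₂ - 1)) * Fz := hFb₂
  have hGb₂' : Gz ≤ ((1 - a₂) / (-a₂)) * Gy := hGb₂
  -- log bookkeeping
  have hBp : (0:ℝ) < b / (b - 1) := div_pos (by linarith) (by linarith)
  have hAp : (0:ℝ) < (1 - a) / (-a) := div_pos (by linarith) (by linarith)
  have hB₁p : (0:ℝ) < b₁ / (b₁ - 1) := div_pos (by linarith) (by linarith)
  have hA₁p : (0:ℝ) < (1 - a₁) / (-a₁) := div_pos (by linarith) (by linarith)
  have hB₂p : (0:ℝ) < b₂ / (b₂ - 1) := div_pos (by linarith) (by linarith)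
  have hA₂p : (0:ℝ) < (1 - a₂) / (-a₂) := div_pos (by linarith) (by linarith)
  have hlogD : 2 * hilbertDist Ω x z = Real.log (b / (b - 1)) + Real.log ((1 - a) / (-a)) := by
    rw [HilbertAux.two_hilbertDist_eq hxz ha hb, Real.log_mul (ne_of_gt hBp) (ne_of_gt hAp)]
  have hlogD₁ : 2 * hilbertDist Ω x y
      = Real.log (b₁ / (b₁ - 1)) + Real.log ((1 - a₁) / (-a₁)) := by
    rw [HilbertAux.two_hilbertDist_eq hxy ha₁ hb₁, Real.log_mul (ne_of_gt hB₁p) (ne_of_gt hA₁p)]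
  have hlogD₂ : 2 * hilbertDist Ω y z
      = Real.log (b₂ / (b₂ - 1)) + Real.log ((1 - a₂) / (-a₂)) := by
    rw [HilbertAux.two_hilbertDist_eq hyz ha₂ hb₂, Real.log_mul (ne_of_gt hB₂p) (ne_of_gt hA₂p)]
  have hlfx : Real.log Fx = Real.log (b / (b - 1)) + Real.log Fz := by
    rw [hFattain, Real.log_mul (ne_of_gt hBp) (ne_of_gt hFzp)]
  have hlgz : Real.log Gz = Real.log ((1 - a) / (-a)) + Real.log Gx := by
    rw [hGattain, Real.log_mul (ne_of_gt hAp) (ne_of_gt hGxp)]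
  have hl1 : Real.log Fx ≤ Real.log (b₁ / (b₁ - 1)) + Real.log Fy := by
    rw [← Real.log_mul (ne_of_gt hB₁p) (ne_of_gt hFyp)]
    exact (Real.log_le_log_iff hFxp (by positivity)).2 hFb₁'
  have hl2 : Real.log Gy ≤ Real.log ((1 - a₁) / (-a₁)) + Real.log Gx := by
    rw [← Real.log_mul (ne_of_gt hA₁p) (ne_of_gt hGxp)]
    exact (Real.log_le_log_iff hGyp (by positivity)).2 hGb₁'
  have hl3 : Real.log Fy ≤ Real.log (b₂ / (b₂ - 1)) + Real.log Fz := by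
    rw [← Real.log_mul (ne_of_gt hB₂p) (ne_of_gt hFzp)]
    exact (Real.log_le_log_iff hFyp (by positivity)).2 hFb₂'
  have hl4 : Real.log Gz ≤ Real.log ((1 - a₂) / (-a₂)) + Real.log Gy := by
    rw [← Real.log_mul (ne_of_gt hA₂p) (ne_of_gt hGyp)]
    exact (Real.log_le_log_iff hGzp (by positivity)).2 hGb₂'
  -- equality extraction
  have heq1 : Real.log Fx = Real.log (b₁ / (b₁ - 1)) + Real.log Fy := by
    linarith only [hl1, hl2, hl3, hl4, hlogD, hlogD₁, hlogD₂, hlfx, hlgz, hadd]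
  have heq3 : Real.log Fy = Real.log (b₂ / (b₂ - 1)) + Real.log Fz := by
    linarith only [hl1, hl2, hl3, hl4, hlogD, hlogD₁, hlogD₂, hlfx, hlgz, hadd]
  have hFxB : Fx = (b₁ / (b₁ - 1)) * Fy := by
    apply Real.log_injOn_pos (mem_Ioi.2 hFxp) (mem_Ioi.2 (by positivity))
    rw [Real.log_mul (ne_of_gt hB₁p) (ne_of_gt hFyp)]
    exact heq1
  have hFyB : Fy = (b₂ / (b₂ - 1)) * Fz := by
    apply Real.log_injOn_pos (mem_Ioi.2 hFyp) (mem_Ioi.2 (by positivity))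
    rw [Real.log_mul (ne_of_gt hB₂p) (ne_of_gt hFzp)]
    exact heq3
  -- F vanishes at the outer boundary points of the chords (x,y) and (y,z)
  have hb₁ne : b₁ - 1 ≠ 0 := by linarith
  have hb₂ne : b₂ - 1 ≠ 0 := by linarith
  have hprod₁ : (b₁ - 1) * Fx = b₁ * Fy := by
    rw [hFxB, div_mul_eq_mul_div, mul_div_assoc']
    field_simp
  have hprod₂ : (b₂ - 1) * Fy = b₂ * Fz := by
    rw [hFyB, div_mul_eq_mul_div, mul_div_assoc']
    field_simp
  have hq₁0 : ℓF (x + b₁ • (y - x)) + cF = 0 := by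
    rw [HilbertAux.affine_param]
    show (1 - b₁) * Fx + b₁ * Fy = 0
    linear_combination -hprod₁
  have hq₂0 : ℓF (y + b₂ • (z - y)) + cF = 0 := by
    rw [HilbertAux.affine_param]
    show (1 - b₂) * Fy + b₂ * Fz = 0
    linear_combination -hprod₂
  -- strict convexity: the three boundary points coincide
  have hv₁ : x + b₁ • (y - x) = x + b • (z - x) :=
    HilbertAux.frontier_point_unique hop hconv hstrict ℓF cF hFpos hqc₁ hqn₁ hq₁0 hqc hqn hFv
  have hv₂ : y + b₂ • (z - y) = x + b • (z - x) :=
    HilbertAux.frontier_point_unique hop hconv hstrict ℓF cF hFpos hqc₂ hqn₂ hq₂0 hqc hqn hFv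
  -- collinearity and betweenness
  have hb₁0 : b₁ ≠ 0 := by linarith
  have hyx : y = x + (b / b₁) • (z - x) := by
    have h1 : b₁ • (y - x) = b • (z - x) := add_left_cancel hv₁
    have h2 : y - x = (b / b₁) • (z - x) := by
      calc y - x = b₁⁻¹ • (b₁ • (y - x)) := by
            rw [smul_smul, inv_mul_cancel₀ hb₁0, one_smul]
        _ = b₁⁻¹ • (b • (z - x)) := by rw [h1]
        _ = (b / b₁) • (z - x) := by rw [smul_smul, div_eq_inv_mul]
    rw [← h2]
    abel
  set s := b / b₁ with hsdef
  have hs_pos : 0 < s := div_pos (by linarith) (by linarith)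
  have hcoef : s + b₂ * (1 - s) = b := by
    have h3 : x + (s + b₂ * (1 - s)) • (z - x) = x + b • (z - x) := by
      rw [← hv₂, hyx]
      module
    have h4 := add_left_cancel h3
    have h5 : (s + b₂ * (1 - s) - b) • (z - x) = (0 : EuclideanSpace ℝ (Fin n)) := by
      rw [sub_smul, h4, sub_self]
    rcases smul_eq_zero.1 h5 with h | h
    · exact sub_eq_zero.1 h
    · rw [sub_eq_zero] at h
      exact absurd h.symm hxz
  have hs_lt : s < 1 := by
    have h2 : b - 1 = (1 - s) * (b₂ - 1) := by linear_combination (-1 : ℝ) * hcoef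
    by_contra hs1
    push_neg at hs1
    have h3 : (1 - s) * (b₂ - 1) ≤ 0 :=
      mul_nonpos_of_nonpos_of_nonneg (by linarith only [hs1]) (by linarith only [hb₂])
    linarith only [h2, h3, hb]
  exact ⟨1 - s, s, by linarith, hs_pos.le, by ring, by rw [hyx]; module⟩

end
end

section
/- The Hilbert metric of the open unit ball is the hyperbolic metric in the Cayley–Klein–Beltrami model: if Ω is the open unit ball of the Euclidean space ℝⁿ (n ≥ 1) and x, y ∈ Ω, then cosh(d_Ω(x,y)) = (1 − ⟨x,y⟩) / √((1 − ‖x‖²)·(1 − ‖y‖²)), where ⟨·,·⟩ and ‖·‖ are the Euclidean inner product and norm. -/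
open Set MeasureTheory
open scoped ENNReal Classical

noncomputable section

private lemma quad_interval_aux {A B C a b : ℝ} (hA : 0 < A) (hab : a ≤ b)
    (hkey : ∀ t : ℝ, A*t^2 + 2*B*t + C = A*(t-a)*(t-b)) (t : ℝ) :
    A*t^2 + 2*B*t + (C+1) ≤ 1 ↔ a ≤ t ∧ t ≤ b := by
  have h2 := hkey t
  constructor
  · intro h
    have hq : (t-a)*(t-b) ≤ 0 := by
      by_contra h'
      push_neg at h'
      nlinarith [mul_pos hA h']
    constructor
    · by_contra h'
      push_neg at h'
      nlinarith [mul_pos (by linarith : (0:ℝ) < a-t) (by linarith : (0:ℝ) < b-t)]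
    · by_contra h'
      push_neg at h'
      nlinarith [mul_pos (by linarith : (0:ℝ) < t-a) (by linarith : (0:ℝ) < t-b)]
  · rintro ⟨h1, h2'⟩
    nlinarith [mul_nonneg hA.le
      (mul_nonneg (by linarith : (0:ℝ) ≤ t-a) (by linarith : (0:ℝ) ≤ b-t))]

set_option maxHeartbeats 1000000 in
/-- The Hilbert metric of the open unit ball is the hyperbolic metric
in the Cayley–Klein–Beltrami model:
`cosh (d_Ω(x,y)) = (1 - ⟨x,y⟩) / √((1 - ‖x‖²)(1 - ‖y‖²))`. -/
theorem hilbertDist_unit_ball_cayley_klein {n : ℕ} (hn : 1 ≤ n)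
    (x y : EuclideanSpace ℝ (Fin n))
    (hx : x ∈ Metric.ball (0 : EuclideanSpace ℝ (Fin n)) 1)
    (hy : y ∈ Metric.ball (0 : EuclideanSpace ℝ (Fin n)) 1) :
    Real.cosh (hilbertDist (Metric.ball (0 : EuclideanSpace ℝ (Fin n)) 1) x y) =
      (1 - (inner ℝ x y : ℝ)) / Real.sqrt ((1 - ‖x‖ ^ 2) * (1 - ‖y‖ ^ 2)) := by
  have hx1 : ‖x‖ < 1 := by simpa using hx
  have hy1 : ‖y‖ < 1 := by simpa using hy
  have hx2 : (0:ℝ) < 1 - ‖x‖^2 := by nlinarith [norm_nonneg x]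
  have hy2 : (0:ℝ) < 1 - ‖y‖^2 := by nlinarith [norm_nonneg y]
  by_cases hxy : x = y
  · subst hxy
    rw [hilbertDist, if_pos rfl, Real.cosh_zero, real_inner_self_eq_norm_sq,
      show (1 - ‖x‖^2) * (1 - ‖x‖^2) = (1-‖x‖^2)^2 by ring, Real.sqrt_sq hx2.le]
    field_simp
  · set v : EuclideanSpace ℝ (Fin n) := y - x with hv
    have hvne : v ≠ 0 := sub_ne_zero.mpr (Ne.symm hxy)
    have hvn : 0 < ‖v‖ := norm_pos_iff.mpr hvne
    set A : ℝ := ‖v‖^2 with hA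
    set B : ℝ := (inner ℝ x v : ℝ) with hB
    set C : ℝ := ‖x‖^2 - 1 with hC
    have hApos : 0 < A := by rw [hA]; positivity
    have hCneg : C < 0 := by rw [hC]; nlinarith
    have hyxv : y = x + v := by rw [hv]; abel
    have hval : ∀ t : ℝ, ‖x + t • v‖^2 = A*t^2 + 2*B*t + (C+1) := by
      intro t
      rw [norm_add_sq_real, real_inner_smul_right, norm_smul, Real.norm_eq_abs,
        mul_pow, sq_abs, hA, hB, hC]
      ring
    have hyval : ‖y‖^2 = A + 2*B + (C+1) := by
      have h := hval 1; rw [one_smul, ← hyxv] at h; linarith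
    have hDpos : 0 < B^2 - A*C := by nlinarith
    set s : ℝ := Real.sqrt (B^2 - A*C) with hs
    have hspos : 0 < s := Real.sqrt_pos.mpr hDpos
    have hs2 : s^2 = B^2 - A*C := Real.sq_sqrt hDpos.le
    set a : ℝ := (-B - s)/A with ha
    set b : ℝ := (-B + s)/A with hb
    have hsa : A * a = -B - s := by
      rw [ha, mul_div_cancel₀ _ hApos.ne']
    have hsb : A * b = -B + s := by
      rw [hb, mul_div_cancel₀ _ hApos.ne']
    have hab : a ≤ b := by
      rw [ha, hb, div_le_div_iff₀ hApos hApos]; nlinarith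
    have hSab : A*(a+b) = -2*B := by linear_combination hsa + hsb
    have hPab : A*(a*b) = C := by
      have h : A*(A*(a*b)) = A*C := by
        linear_combination (A*b)*hsa + (-B-s)*hsb - hs2
      exact mul_left_cancel₀ hApos.ne' h
    have hkey : ∀ t : ℝ, A*t^2 + 2*B*t + C = A*(t-a)*(t-b) := by
      intro t
      linear_combination t*hSab - hPab
    clear_value v A B C s a b
    have habneg : a*b < 0 := by
      by_contra h
      push_neg at h
      nlinarith [mul_nonneg hApos.le h]
    have ha0 : a < 0 := by
      by_contra h
      push_neg at h
      nlinarith [mul_nonneg h (h.trans hab)]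
    have hb0 : 0 < b := by
      by_contra h
      push_neg at h
      have h2 : 0 ≤ (-a) * (-b) := mul_nonneg (by linarith) (by linarith)
      rw [neg_mul_neg] at h2
      linarith
    have hb1 : 1 < b := by
      have h1 := hkey 1
      have hy' : A + 2*B + C < 0 := by linarith [hyval, hy2]
      by_contra h
      push_neg at h
      have h2 : 0 ≤ A*((1-a)*(1-b)) := mul_nonneg hApos.le
        (mul_nonneg (by linarith) (by linarith))
      linarith [h1]
    have hmem : chordParams (Metric.ball (0 : EuclideanSpace ℝ (Fin n)) 1) x y
        = Icc a b := by
      ext t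
      have hcl : closure (Metric.ball (0 : EuclideanSpace ℝ (Fin n)) 1)
          = Metric.closedBall 0 1 := closure_ball 0 one_ne_zero
      simp only [chordParams, mem_setOf_eq, hcl, Metric.mem_closedBall,
        dist_zero_right, ← hv, mem_Icc]
      have hiff : ‖x + t • v‖ ≤ 1 ↔ ‖x + t • v‖^2 ≤ 1 :=
        (pow_le_one_iff_of_nonneg (norm_nonneg _) two_ne_zero).symm
      rw [hiff, hval t]
      exact quad_interval_aux hApos hab hkey t
    have hInf : sInf (chordParams (Metric.ball (0 : EuclideanSpace ℝ (Fin n)) 1) x y) = a := by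
      rw [hmem]; exact csInf_Icc hab
    have hSup : sSup (chordParams (Metric.ball (0 : EuclideanSpace ℝ (Fin n)) 1) x y) = b := by
      rw [hmem]; exact csSup_Icc hab
    set L : ℝ := ‖v‖ with hL
    have hLpos : 0 < L := hvn
    have hpy : dist (x + a • v) y = (1-a)*L := by
      rw [dist_eq_norm, hyxv, show x + a • v - (x + v) = (a-1) • v by
        rw [sub_smul, one_smul]; abel, norm_smul, Real.norm_eq_abs,
        abs_of_nonpos (by linarith : a - 1 ≤ 0)]
      rw [hL]; ring
    have hqx : dist (x + b • v) x = b*L := by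
      rw [dist_eq_norm, show x + b • v - x = b • v by abel, norm_smul,
        Real.norm_eq_abs, abs_of_pos hb0, hL]
    have hpx : dist (x + a • v) x = (-a)*L := by
      rw [dist_eq_norm, show x + a • v - x = a • v by abel, norm_smul,
        Real.norm_eq_abs, abs_of_neg ha0, hL]
    have hqy : dist (x + b • v) y = (b-1)*L := by
      rw [dist_eq_norm, hyxv, show x + b • v - (x + v) = (b-1) • v by
        rw [sub_smul, one_smul]; abel, norm_smul, Real.norm_eq_abs,
        abs_of_pos (by linarith : (0:ℝ) < b - 1), hL]
    set N : ℝ := (1-a)*b with hN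
    set D : ℝ := (-a)*(b-1) with hD
    clear_value L
    have hNpos : 0 < N := mul_pos (by linarith) hb0
    have hDpos' : 0 < D := mul_pos (by linarith) (by linarith)
    have hratio : ((1-a)*L * (b*L)) / ((-a)*L * ((b-1)*L)) = N / D := by
      rw [hN, hD, div_eq_div_iff (mul_pos (mul_pos (neg_pos.mpr ha0) hLpos)
        (mul_pos (sub_pos.mpr hb1) hLpos)).ne' hDpos'.ne']
      ring
    simp only [hilbertDist, if_neg hxy]
    rw [← hv, hInf, hSup, hpy, hqx, hpx, hqy, hratio]
    clear_value N D
    have hRpos : 0 < N / D := div_pos hNpos hDpos'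
    set u : ℝ := Real.sqrt (N / D) with hu
    have hupos : 0 < u := Real.sqrt_pos.mpr hRpos
    have hu2 : u^2 = N / D := Real.sq_sqrt hRpos.le
    have hexp : Real.exp (1 / 2 * Real.log (N/D)) = u := by
      have hsq : Real.exp (1 / 2 * Real.log (N/D)) ^ 2 = N / D := by
        rw [sq, ← Real.exp_add, show 1/2 * Real.log (N/D) + 1/2 * Real.log (N/D)
          = Real.log (N/D) by ring, Real.exp_log hRpos]
      have h1 : Real.sqrt (Real.exp (1 / 2 * Real.log (N/D)) ^ 2)
          = Real.sqrt (N / D) := by rw [hsq]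
      rwa [Real.sqrt_sq (Real.exp_pos _).le, ← hu] at h1
    clear_value u
    rw [Real.cosh_eq, Real.exp_neg, hexp]
    have hip : (inner ℝ x y : ℝ) = B + C + 1 := by
      have h : (inner ℝ x v : ℝ) = inner ℝ x y - inner ℝ x x := by
        rw [hv, inner_sub_right]
      rw [real_inner_self_eq_norm_sq] at h
      rw [← hB] at h
      rw [hC]; linarith
    have hsum : N + D = (-2*B - 2*C)/A := by
      rw [eq_div_iff hApos.ne', hN, hD]
      linear_combination hSab - 2*hPab
    have hprod : N * D = ((1 - ‖x‖^2)*(1 - ‖y‖^2))/A^2 := by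
      rw [eq_div_iff (pow_ne_zero 2 hApos.ne'), hN, hD]
      linear_combination (-C)*hSab + (A + C + A*(a*b) - A*(a+b))*hPab
        + (-C)*hyval + (‖y‖^2 - 1)*hC
    set G : ℝ := Real.sqrt ((1 - ‖x‖^2)*(1 - ‖y‖^2)) with hG
    have hGpos : 0 < G := Real.sqrt_pos.mpr (mul_pos hx2 hy2)
    clear_value G
    have hG2 : G^2 = (1 - ‖x‖^2)*(1 - ‖y‖^2) := by
      rw [hG]; exact Real.sq_sqrt (mul_pos hx2 hy2).le
    have huD : u * D = G / A := by
      have h2 : (u*D)^2 = (G/A)^2 := by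
        rw [mul_pow, hu2, div_pow, hG2, ← hprod, div_mul_eq_mul_div, sq,
          ← mul_assoc, mul_div_assoc, div_self hDpos'.ne', mul_one]
      calc u * D = Real.sqrt ((u*D)^2) := (Real.sqrt_sq (by positivity)).symm
        _ = Real.sqrt ((G/A)^2) := by rw [h2]
        _ = G / A := Real.sqrt_sq (by positivity)
    have huN : u^2 * D = N := by
      rw [hu2, div_mul_cancel₀ _ hDpos'.ne']
    have step1 : (u + u⁻¹)/2 = (N + D)/(2*(u*D)) := by
      rw [div_eq_div_iff (two_ne_zero)
        (mul_ne_zero two_ne_zero (mul_ne_zero hupos.ne' hDpos'.ne'))]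
      have hui : u * u⁻¹ = 1 := mul_inv_cancel₀ hupos.ne'
      linear_combination 2*D*hui + 2*huN
    rw [step1, huD, hsum, hip,
      div_eq_div_iff (mul_ne_zero two_ne_zero (div_ne_zero hGpos.ne' hApos.ne')) hGpos.ne']
    ring
end
end
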